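/- Let {φ_j} be a sequence of vectors in ℝ^d, Λ_0 a positive-definite d×d matrix, and Λ_t = Λ_0 + Σ_{j=1}^{t-1} φ_j φ_j^⊤. Then for any positive integer t, Σ_{j=1}^t min{1, ‖φ_j‖²_{Λ_j^{-1}}} ≤ 2 log(det(Λ_{t+1}) / det(Λ_1)), where ‖x‖²_A = x^⊤ A x. -/

import Mathlib

open Matrix Finset

lemma ep_vecMulVec_posSemidef {d : ℕ} (u : Fin d → ℝ) : (vecMulVec u u).PosSemidef := by
  refine PosSemidef.of_dotProduct_mulVec_nonneg ?_ ?_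
  · ext i j; simp [vecMulVec_apply, conjTranspose_apply, mul_comm]
  · intro x
    have : star x ⬝ᵥ (vecMulVec u u) *ᵥ x = (u ⬝ᵥ x) * (u ⬝ᵥ x) := by
      simp [dotProduct, mulVec, vecMulVec_apply, Finset.mul_sum, Finset.sum_mul, mul_assoc,
        mul_comm, mul_left_comm]
    rw [this]
    exact mul_self_nonneg _

lemma ep_min_le_two_log {x : ℝ} (hx : 0 ≤ x) : min 1 x ≤ 2 * Real.log (1 + x) := by
  have h1x : (0:ℝ) < 1 + x := by linarith
  have hlog : 1 - (1 + x)⁻¹ ≤ Real.log (1 + x) := by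
    have := Real.add_one_le_exp (-Real.log (1 + x))
    rw [Real.exp_neg, Real.exp_log h1x] at this
    have h2 := inv_pos.mpr h1x
    nlinarith
  have hmul : (1+x) * (1+x)⁻¹ = 1 := mul_inv_cancel₀ (ne_of_gt h1x)
  rcases le_total x 1 with h | h
  · have key : x / 2 ≤ 1 - (1 + x)⁻¹ := by
      nlinarith [mul_nonneg hx (sub_nonneg.mpr h)]
    calc min 1 x ≤ x := min_le_right _ _
      _ ≤ 2 * Real.log (1 + x) := by linarith
  · have key : (1:ℝ) - (1+x)⁻¹ ≥ 1/2 := by nlinarith [inv_nonneg.mpr h1x.le]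
    calc min 1 x ≤ 1 := min_le_left _ _
      _ ≤ 2 * Real.log (1 + x) := by linarith

lemma ep_det_lemma {d : ℕ} (A : Matrix (Fin d) (Fin d) ℝ) (hA : IsUnit A.det) (u : Fin d → ℝ) :
    (A + vecMulVec u u).det = A.det * (1 + u ⬝ᵥ A⁻¹ *ᵥ u) := by
  have h1 : A + vecMulVec u u = A * (1 + A⁻¹ * (replicateCol (Fin 1) u * replicateRow (Fin 1) u)) := by
    rw [Matrix.mul_add, Matrix.mul_one, ← Matrix.mul_assoc,
      Matrix.mul_nonsing_inv A hA, Matrix.one_mul, vecMulVec_eq (Fin 1)]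
    rfl
  rw [h1, det_mul]
  congr 1
  rw [← Matrix.mul_assoc, Matrix.det_one_add_mul_comm, det_fin_one]
  simp only [Matrix.add_apply, Matrix.mul_apply, Matrix.replicateRow_apply,
    Matrix.replicateCol_apply, dotProduct, mulVec, Matrix.one_apply_eq]

lemma ep_telescope (f : ℕ → ℝ) (t : ℕ) :
    ∑ j ∈ Finset.Icc 1 t, (f (j + 1) - f j) = f (t + 1) - f 1 := by
  induction t with
  | zero => simp
  | succ n ih =>
      rw [Finset.sum_Icc_succ_top (by omega : 1 ≤ n + 1), ih]
      ring

/-- Elliptical potential lemma. -/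
theorem elliptical_potential {d : ℕ} (φ : ℕ → Fin d → ℝ)
    (Λ0 : Matrix (Fin d) (Fin d) ℝ) (hΛ0 : Λ0.PosDef)
    (Λ : ℕ → Matrix (Fin d) (Fin d) ℝ)
    (hΛ : ∀ t, Λ t = Λ0 + ∑ j ∈ Finset.Ico 1 t, vecMulVec (φ j) (φ j))
    (t : ℕ) (ht : 1 ≤ t) :
    ∑ j ∈ Finset.Icc 1 t, min 1 ((φ j) ⬝ᵥ (Λ j)⁻¹.mulVec (φ j)) ≤
      2 * Real.log ((Λ (t + 1)).det / (Λ 1).det) := by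
  have hPD : ∀ j, (Λ j).PosDef := by
    intro j
    rw [hΛ]
    refine hΛ0.add_posSemidef ?_
    refine Finset.sum_induction _ _ (fun a b ha hb => ha.add hb)
      (Matrix.PosSemidef.zero) ?_
    exact fun i _ => ep_vecMulVec_posSemidef (φ i)
  have hdet : ∀ j, 0 < (Λ j).det := fun j => (hPD j).det_pos
  set q : ℕ → ℝ := fun j => φ j ⬝ᵥ (Λ j)⁻¹ *ᵥ φ j with hq_def
  have hq : ∀ j, 0 ≤ q j := by
    intro j
    have h := ((hPD j).inv).posSemidef.dotProduct_mulVec_nonneg (φ j)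
    simpa using h
  have hstep : ∀ j, 1 ≤ j → Λ (j + 1) = Λ j + vecMulVec (φ j) (φ j) := by
    intro j hj
    rw [hΛ, hΛ, Finset.sum_Ico_succ_top hj, add_assoc]
  have hdetstep : ∀ j, 1 ≤ j → (Λ (j + 1)).det = (Λ j).det * (1 + q j) := by
    intro j hj
    rw [hstep j hj]
    exact ep_det_lemma (Λ j) (isUnit_iff_ne_zero.mpr (hdet j).ne') (φ j)
  set L : ℕ → ℝ := fun j => Real.log (Λ j).det with hL_def
  have hlogstep : ∀ j, 1 ≤ j → Real.log (1 + q j) = L (j + 1) - L j := by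
    intro j hj
    have h1q : (0:ℝ) < 1 + q j := by have := hq j; linarith
    rw [hL_def]
    simp only
    rw [hdetstep j hj, Real.log_mul (hdet j).ne' h1q.ne']
    ring
  calc ∑ j ∈ Finset.Icc 1 t, min 1 (q j)
      ≤ ∑ j ∈ Finset.Icc 1 t, 2 * Real.log (1 + q j) :=
        Finset.sum_le_sum fun j _ => ep_min_le_two_log (hq j)
    _ = ∑ j ∈ Finset.Icc 1 t, 2 * (L (j + 1) - L j) := by
        refine Finset.sum_congr rfl fun j hj => ?_
        rw [hlogstep j (Finset.mem_Icc.mp hj).1]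
    _ = 2 * ∑ j ∈ Finset.Icc 1 t, (L (j + 1) - L j) := by rw [Finset.mul_sum]
    _ = 2 * (L (t + 1) - L 1) := by rw [ep_telescope]
    _ = 2 * Real.log ((Λ (t + 1)).det / (Λ 1).det) := by
        rw [hL_def]
        simp only
        rw [Real.log_div (hdet (t + 1)).ne' (hdet 1).ne']
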